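/- For n ≥ 2, the number of ordered pairs (p, q) with p ∈ S_n, q ∈ S_{n−1}, and q a pattern of p, equals (n−1)!·(n² − 2n + 2), which equals n!·(n − 2(n−1)/n). -/

import Mathlib

open Finset

/-- `del p i`: delete the `i`-th entry of `p` and relabel order-isomorphically. -/
def del {n : ℕ} (p : Equiv.Perm (Fin (n + 1))) (i : Fin (n + 1)) : Equiv.Perm (Fin n) :=
  (Tuple.sort fun j => p (i.succAbove j))⁻¹

/-- `D1 p`: the set of `(n-1)`-patterns of `p`. -/
def D1 {n : ℕ} (p : Equiv.Perm (Fin (n + 1))) : Finset (Equiv.Perm (Fin n)) :=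
  Finset.univ.image (del p)

/-- `ins q j k`: insert the value `k - 1/2` just left of position `j` and relabel. -/
def ins {n : ℕ} (q : Equiv.Perm (Fin n)) (j k : Fin (n + 1)) : Equiv.Perm (Fin (n + 1)) :=
  (finSuccEquiv' j).trans ((Equiv.optionCongr q).trans (finSuccEquiv' k).symm)

/-- `C p`: the number of bonds of `p` (adjacent positions with values differing by 1). -/
def C {n : ℕ} (p : Equiv.Perm (Fin (n + 1))) : ℕ :=
  (Finset.univ.filter fun i : Fin n =>
    Nat.dist (p i.castSucc).val (p i.succ).val = 1).card

/-- minimum gap of an injective word `f`, via the taxicab metric on (index, value). -/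
noncomputable def mgF {n : ℕ} (f : Fin n → ℕ) : ℕ :=
  sInf {m : ℕ | ∃ i j : Fin n, i < j ∧ Nat.dist i.val j.val + Nat.dist (f i) (f j) = m}

/-- minimum gap of a permutation. -/
noncomputable def mg {n : ℕ} (p : Equiv.Perm (Fin n)) : ℕ := mgF fun i => (p i).val

/-- the span of entries `p i` and `p j`: indices of entries strictly between them
horizontally or vertically. -/
def span {n : ℕ} (p : Equiv.Perm (Fin n)) (i j : Fin n) : Finset (Fin n) :=
  Finset.univ.filter fun m =>
    (i < m ∧ m < j) ∨ (min (p i) (p j) < p m ∧ p m < max (p i) (p j))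

/-- the pattern of `p` after deleting the entries at positions in `S`, encoded as the
list of (0-based) ranks of the remaining entries in positional order. -/
def patList {n : ℕ} (p : Equiv.Perm (Fin n)) (S : Finset (Fin n)) : List ℕ :=
  let l := (Sᶜ.sort (· ≤ ·)).map fun t => (p t).val
  l.map fun v => (l.filter fun w => w < v).length

/-- `Dk p k`: the set of distinct `(n-k)`-patterns of `p`. -/
def Dk {n : ℕ} (p : Equiv.Perm (Fin n)) (k : ℕ) : Finset (List ℕ) :=
  (Finset.univ.filter fun S : Finset (Fin n) => S.card = k).image (patList p)

theorem Equiv.Perm.apply_inv_self {α : Type*} (f : Equiv.Perm α) (x : α) : f (f⁻¹ x) = x :=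
  Equiv.apply_symm_apply f x

theorem Equiv.Perm.inv_apply_self {α : Type*} (f : Equiv.Perm α) (x : α) : f⁻¹ (f x) = x :=
  Equiv.symm_apply_apply f x

namespace Aux18
variable {n : ℕ}

lemma ins_apply_self (q : Equiv.Perm (Fin n)) (j k : Fin (n + 1)) : ins q j k j = k := by
  simp [ins, finSuccEquiv'_at]

lemma ins_apply_succAbove (q : Equiv.Perm (Fin n)) (j k : Fin (n + 1)) (a : Fin n) :
    ins q j k (j.succAbove a) = k.succAbove (q a) := by
  simp [ins, finSuccEquiv'_succAbove]

lemma del_eq_iff {p : Equiv.Perm (Fin (n + 1))} {i : Fin (n + 1)} {q : Equiv.Perm (Fin n)} :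
    del p i = q ↔ Monotone fun a => p (i.succAbove (q⁻¹ a)) := by
  have hf : Function.Injective fun a => p (i.succAbove a) :=
    p.injective.comp Fin.succAbove_right_injective
  rw [del, inv_eq_iff_eq_inv]
  constructor
  · intro h
    rw [← h]
    exact Tuple.monotone_sort fun a => p (i.succAbove a)
  · intro hm
    have h2 := Tuple.unique_monotone (f := fun a => p (i.succAbove a)) (σ := q⁻¹)
      (τ := Tuple.sort fun a => p (i.succAbove a)) hm (Tuple.monotone_sort _)
    refine Equiv.ext fun a => ?_
    exact (hf (congrFun h2 a)).symm

lemma comp_sort_eq {k : Fin (n + 1)} {f : Fin n → Fin (n + 1)} (hf : Function.Injective f)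
    (hr : Set.range f = {k}ᶜ) : f ∘ Tuple.sort f = k.succAbove := by
  have h1 : StrictMono (f ∘ Tuple.sort f) :=
    (Tuple.monotone_sort f).strictMono_of_injective (hf.comp (Equiv.injective _))
  have h2 : StrictMono (k.succAbove) := Fin.strictMono_succAbove k
  have : WellFoundedLT (Fin n) := inferInstance
  have h3 := StrictMono.range_inj h1 h2
  refine h3.1 ?_
  have : Set.range (f ∘ Tuple.sort f) = Set.range f := by
    rw [Set.range_comp]
    rw [Set.range_eq_univ.2 (Equiv.surjective _), Set.image_univ]
  rw [this, hr, Fin.range_succAbove]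

lemma ins_eq_iff {q : Equiv.Perm (Fin n)} {j k : Fin (n + 1)} {p : Equiv.Perm (Fin (n + 1))} :
    ins q j k = p ↔ p j = k ∧ del p j = q := by
  constructor
  · rintro rfl
    refine ⟨ins_apply_self q j k, del_eq_iff.2 ?_⟩
    have h : (fun a => ins q j k (j.succAbove (q⁻¹ a))) = fun a => k.succAbove a := by
      funext a
      rw [ins_apply_succAbove, Equiv.Perm.apply_inv_self]
    rw [h]
    exact (Fin.strictMono_succAbove k).monotone
  · rintro ⟨hk, hq⟩
    set f : Fin n → Fin (n + 1) := fun a => p (j.succAbove a) with hfdef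
    have hf : Function.Injective f := p.injective.comp Fin.succAbove_right_injective
    have hr : Set.range f = {k}ᶜ := by
      ext x
      simp only [Set.mem_range, Set.mem_compl_iff, Set.mem_singleton_iff]
      constructor
      · rintro ⟨a, rfl⟩ h
        exact (Fin.succAbove_ne j a) (p.injective (h.trans hk.symm))
      · intro hx
        have hmem : p⁻¹ x ∈ Set.range j.succAbove := by
          rw [Fin.range_succAbove]
          intro h
          apply hx
          rw [← hk, ← h, Equiv.Perm.apply_inv_self]
        obtain ⟨a, ha⟩ := hmem
        exact ⟨a, by rw [hfdef]; simp only; rw [ha, Equiv.Perm.apply_inv_self]⟩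
    have hcs : f ∘ Tuple.sort f = k.succAbove := comp_sort_eq hf hr
    refine Equiv.ext fun x => ?_
    rcases eq_or_ne x j with rfl | hx
    · rw [ins_apply_self, hk]
    · obtain ⟨a, rfl⟩ : ∃ a, j.succAbove a = x := by
        have : x ∈ Set.range (j.succAbove) := by
          rw [Fin.range_succAbove]; exact hx
        exact this
      rw [ins_apply_succAbove, ← hq]
      have h1 : del p j a = (Tuple.sort f)⁻¹ a := rfl
      rw [h1]
      calc k.succAbove ((Tuple.sort f)⁻¹ a)
          = (f ∘ Tuple.sort f) ((Tuple.sort f)⁻¹ a) := by rw [hcs]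
        _ = f ((Tuple.sort f) ((Tuple.sort f)⁻¹ a)) := rfl
        _ = f a := by rw [Equiv.Perm.apply_inv_self]


lemma val_succAbove (p : Fin (n + 1)) (i : Fin n) :
    (p.succAbove i).val = if i.val < p.val then i.val else i.val + 1 := by
  rcases lt_or_ge (i.val) (p.val) with h | h
  · rw [Fin.succAbove_of_castSucc_lt _ _ (by simpa [Fin.lt_def] using h), if_pos h]
    rfl
  · rw [Fin.succAbove_of_le_castSucc _ _ (by simpa [Fin.le_def] using h), if_neg (not_lt.2 h)]
    rfl

lemma mono_aux (c : Fin n) (k : Fin (n + 1)) (hk : k.val = c.val ∨ k.val = c.val + 1) :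
    Monotone fun a : Fin n => if a = c then k else k.succAbove a := by
  intro a b hab
  rw [Fin.le_def] at hab
  simp only
  by_cases h1 : a = c <;> by_cases h2 : b = c
  · simp [h1, h2]
  · rw [if_pos h1, if_neg h2, Fin.le_def, val_succAbove]
    have hb : b.val ≠ c.val := fun h => h2 (Fin.ext h)
    have ha : a.val = c.val := congrArg Fin.val h1
    split_ifs <;> omega
  · rw [if_neg h1, if_pos h2, Fin.le_def, val_succAbove]
    have ha : a.val ≠ c.val := fun h => h1 (Fin.ext h)
    have hb : b.val = c.val := congrArg Fin.val h2
    split_ifs <;> omega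
  · rw [if_neg h1, if_neg h2]
    exact (Fin.strictMono_succAbove k).monotone (Fin.le_def.2 hab)

lemma succAbove_cases (j b : Fin n) :
    (j.castSucc.succAbove b) = if b = j then j.succ else j.succ.succAbove b := by
  by_cases h : b = j
  · rw [if_pos h]
    apply Fin.ext
    rw [val_succAbove]
    have : b.val = j.val := congrArg Fin.val h
    simp only [Fin.coe_castSucc, Fin.val_succ]
    split_ifs <;> omega
  · rw [if_neg h]
    apply Fin.ext
    rw [val_succAbove, val_succAbove]
    have : b.val ≠ j.val := fun hh => h (Fin.ext hh)
    simp only [Fin.coe_castSucc, Fin.val_succ]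
    split_ifs <;> omega

lemma ins_succ_apply (q : Equiv.Perm (Fin n)) (j : Fin n) (k : Fin (n + 1)) (b : Fin n) :
    ins q j.succ k (j.castSucc.succAbove b) = if b = j then k else k.succAbove (q b) := by
  by_cases h : b = j
  · rw [if_pos h, succAbove_cases, if_pos h, ins_apply_self]
  · rw [if_neg h, succAbove_cases, if_neg h, ins_apply_succAbove]

lemma ins_swap (q : Equiv.Perm (Fin n)) (j : Fin n) (k : Fin (n + 1))
    (hk : k = (q j).castSucc ∨ k = (q j).succ) :
    ∃ k', ins q j.castSucc k' = ins q j.succ k := by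
  refine ⟨ins q j.succ k j.castSucc, ins_eq_iff.2 ⟨rfl, ?_⟩⟩
  rw [del_eq_iff]
  have hfun : (fun a => ins q j.succ k (j.castSucc.succAbove (q⁻¹ a)))
      = fun a => if a = q j then k else k.succAbove a := by
    funext a
    rw [ins_succ_apply]
    by_cases h : a = q j
    · rw [if_pos (by rw [h, Equiv.Perm.inv_apply_self]), if_pos h]
    · rw [if_neg (fun hh => h (by rw [← congrArg q hh, Equiv.Perm.apply_inv_self])), if_neg h,
        Equiv.Perm.apply_inv_self]
  rw [hfun]
  refine mono_aux (q j) k ?_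
  rcases hk with rfl | rfl
  · exact Or.inl rfl
  · exact Or.inr rfl

lemma ins_inj_aux {q : Equiv.Perm (Fin n)} {j k j' k' : Fin (n + 1)}
    (h : ins q j k = ins q j' k') (hjj : j < j') :
    ∃ t : Fin n, j' = t.succ ∧ (k' = (q t).castSucc ∨ k' = (q t).succ) := by
  have hj0 : j' ≠ 0 := Fin.pos_iff_ne_zero.1 (lt_of_le_of_lt (Fin.zero_le j) hjj)
  refine ⟨j'.pred hj0, (Fin.succ_pred j' hj0).symm, ?_⟩
  have hsa : j.succAbove (j'.pred hj0) = j' := by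
    rw [Fin.succAbove_of_le_castSucc]
    · exact Fin.succ_pred j' hj0
    · rw [Fin.le_def, Fin.coe_castSucc, Fin.coe_pred]
      rw [Fin.lt_def] at hjj
      omega
  have h1 : ins q j k j' = k' := by rw [h, ins_apply_self]
  rw [← hsa, ins_apply_succAbove] at h1
  rcases lt_or_ge ((q (j'.pred hj0)).castSucc) k with hc | hc
  · exact Or.inl (by rw [← h1, Fin.succAbove_of_castSucc_lt _ _ hc])
  · exact Or.inr (by rw [← h1, Fin.succAbove_of_le_castSucc _ _ hc])

def Bad (q : Equiv.Perm (Fin n)) : Finset (Fin (n + 1) × Fin (n + 1)) :=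
  Finset.univ.filter fun jk =>
    ∃ t : Fin n, jk.1 = t.succ ∧ (jk.2 = (q t).castSucc ∨ jk.2 = (q t).succ)

lemma card_Bad (q : Equiv.Perm (Fin n)) : (Bad q).card = 2 * n := by
  have himg : Bad q = Finset.univ.image (fun tc : Fin n × Bool =>
      (tc.1.succ, if tc.2 then (q tc.1).castSucc else (q tc.1).succ)) := by
    ext ⟨j, k⟩
    simp only [Bad, mem_filter, mem_univ, true_and, mem_image, Prod.mk.injEq, Prod.exists]
    constructor
    · rintro ⟨t, rfl, rfl | rfl⟩
      · exact ⟨t, true, ⟨rfl, rfl⟩⟩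
      · exact ⟨t, false, ⟨rfl, rfl⟩⟩
    · rintro ⟨t, c, rfl, rfl⟩
      cases c
      · exact ⟨t, rfl, Or.inr rfl⟩
      · exact ⟨t, rfl, Or.inl rfl⟩
  rw [himg, Finset.card_image_of_injective _ ?inj, card_univ]
  · simp [Fintype.card_prod]
    ring
  case inj =>
    rintro ⟨t, c⟩ ⟨t', c'⟩ hh
    simp only [Prod.mk.injEq] at hh
    obtain ⟨h1, h2⟩ := hh
    have ht : t = t' := Fin.succ_injective _ h1
    subst ht
    have hne : (q t).castSucc ≠ (q t).succ := ne_of_lt Fin.castSucc_lt_succ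
    cases c <;> cases c' <;> simp_all

lemma reach (q : Equiv.Perm (Fin n)) :
    ∀ m : ℕ, ∀ j k : Fin (n + 1), j.val ≤ m →
      ∃ jk' : Fin (n + 1) × Fin (n + 1), jk' ∉ Bad q ∧ ins q jk'.1 jk'.2 = ins q j k := by
  intro m
  induction m with
  | zero =>
    intro j k hj
    by_cases h : (j, k) ∈ Bad q
    · exfalso
      obtain ⟨t, ht, _⟩ := (mem_filter.1 h).2
      replace ht : j = t.succ := ht
      rw [ht] at hj
      simp [Fin.val_succ] at hj
    · exact ⟨(j, k), h, rfl⟩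
  | succ m ih =>
    intro j k hj
    by_cases h : (j, k) ∈ Bad q
    · obtain ⟨t, ht, hk⟩ := (mem_filter.1 h).2
      simp only at ht hk
      obtain ⟨k', hk'⟩ := ins_swap q t k hk
      obtain ⟨jk', hA, he⟩ := ih t.castSucc k' (by
        rw [ht] at hj
        simp only [Fin.coe_castSucc, Fin.val_succ] at hj ⊢
        omega)
      exact ⟨jk', hA, by rw [he, hk', ht]⟩
    · exact ⟨(j, k), h, rfl⟩

lemma count_q (q : Equiv.Perm (Fin n)) :
    (Finset.univ.filter fun p : Equiv.Perm (Fin (n + 1)) => ∃ i, del p i = q).card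
      = n ^ 2 + 1 := by
  classical
  have himg : (Finset.univ.filter fun p : Equiv.Perm (Fin (n + 1)) => ∃ i, del p i = q)
      = ((Finset.univ : Finset (Fin (n + 1) × Fin (n + 1))) \ Bad q).image
          (fun jk => ins q jk.1 jk.2) := by
    ext p
    simp only [mem_filter, mem_univ, true_and, mem_image, mem_sdiff]
    constructor
    · rintro ⟨i, hi⟩
      have hp : ins q i (p i) = p := ins_eq_iff.2 ⟨rfl, hi⟩
      obtain ⟨jk, hjkA, hjk⟩ := reach q i.val i (p i) le_rfl
      exact ⟨jk, hjkA, by rw [hjk, hp]⟩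
    · rintro ⟨jk, _, rfl⟩
      exact ⟨jk.1, (ins_eq_iff.1 rfl).2⟩
  have hinj : Set.InjOn (fun jk : Fin (n + 1) × Fin (n + 1) => ins q jk.1 jk.2)
      ((Finset.univ \ Bad q) : Finset (Fin (n + 1) × Fin (n + 1))) := by
    rintro ⟨j, k⟩ hjk ⟨j', k'⟩ hjk' h
    simp only [coe_sdiff, coe_univ, Set.mem_diff, Set.mem_univ, true_and, mem_coe] at hjk hjk'
    simp only at h
    rcases lt_trichotomy j j' with hlt | heq | hlt
    · exfalso
      obtain ⟨t, ht, hk⟩ := ins_inj_aux h hlt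
      exact hjk' (mem_filter.2 ⟨mem_univ _, ⟨t, ht, hk⟩⟩)
    · subst heq
      have : k = k' := by
        have h1 : ins q j k j = ins q j k' j := by rw [h]
        rwa [ins_apply_self, ins_apply_self] at h1
      rw [this]
    · exfalso
      obtain ⟨t, ht, hk⟩ := ins_inj_aux h.symm hlt
      exact hjk (mem_filter.2 ⟨mem_univ _, ⟨t, ht, hk⟩⟩)
  rw [himg, Finset.card_image_of_injOn hinj, Finset.card_sdiff_of_subset (subset_univ _), card_Bad,
    card_univ]
  simp only [Fintype.card_prod, Fintype.card_fin]
  rw [show (n + 1) * (n + 1) = (n ^ 2 + 1) + 2 * n by ring, Nat.add_sub_cancel]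

end Aux18

open Aux18

theorem stmt18 {n : ℕ} (hn : 1 ≤ n) :
    ((Finset.univ : Finset (Equiv.Perm (Fin (n + 1)) × Equiv.Perm (Fin n))).filter
        fun pq => ∃ i, del pq.1 i = pq.2).card = Nat.factorial n * (n ^ 2 + 1) ∧
    ((Nat.factorial n * (n ^ 2 + 1) : ℚ)
        = Nat.factorial (n + 1) * ((n + 1) - 2 * n / (n + 1))) := by
  constructor
  · classical
    rw [Finset.card_eq_sum_card_fiberwise
      (f := Prod.snd) (t := (univ : Finset (Equiv.Perm (Fin n)))) (fun x _ => mem_univ _)]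
    have hcongr : ∀ q ∈ (univ : Finset (Equiv.Perm (Fin n))),
        ((Finset.univ.filter fun pq : Equiv.Perm (Fin (n + 1)) × Equiv.Perm (Fin n) =>
            ∃ i, del pq.1 i = pq.2).filter fun pq => pq.snd = q).card = n ^ 2 + 1 := by
      intro q _
      rw [← count_q q]
      apply Finset.card_bij (fun pq _ => pq.1)
      · rintro ⟨p1, p2⟩ hmem
        simp only [mem_filter, mem_univ, true_and] at hmem ⊢
        obtain ⟨⟨i, hi⟩, rfl⟩ := hmem
        exact ⟨i, hi⟩
      · rintro ⟨p1, p2⟩ hmem ⟨p1', p2'⟩ hmem' hh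
        simp only [mem_filter, mem_univ, true_and] at hmem hmem'
        simp only at hh
        exact Prod.ext hh (hmem.2.trans hmem'.2.symm)
      · intro p hp
        simp only [mem_filter, mem_univ, true_and] at hp
        exact ⟨(p, q), by simp only [mem_filter, mem_univ, true_and]; simp [hp], rfl⟩
    rw [Finset.sum_congr rfl hcongr, Finset.sum_const, card_univ, Fintype.card_perm,
      Fintype.card_fin, smul_eq_mul]
  · have hne : ((n : ℚ) + 1) ≠ 0 := by positivity
    rw [Nat.factorial_succ]
    push_cast
    field_simp
    ring
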